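/- For any positive integers k and Δ with 3 ≤ k ≤ Δ, and any real numbers x_1, ..., x_k with 1 ≤ x_j ≤ Δ for all j, we have Σ_{j=1}^k 1/(x_j + k) ≤ 2·(Δ + 2k - 3)/(k² - 1) · Σ_{1≤i<j≤k} 1/(x_i + x_j + 2k - 4). -/

import Mathlib

open Finset

lemma pair_sum {k : ℕ} (g : Fin k → ℝ) :
    ∑ p ∈ Finset.univ.filter (fun p : Fin k × Fin k => p.1 < p.2), (g p.1 + g p.2)
      = ((k : ℝ) - 1) * ∑ j, g j := by
  have hswap : ∑ p ∈ Finset.univ.filter (fun p : Fin k × Fin k => p.2 < p.1), (g p.1 + g p.2)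
      = ∑ p ∈ Finset.univ.filter (fun p : Fin k × Fin k => p.1 < p.2), (g p.1 + g p.2) := by
    apply Finset.sum_nbij' (fun p => Prod.swap p) (fun p => Prod.swap p) <;>
      simp [add_comm]
  have htot : ∑ p : Fin k × Fin k, (g p.1 + g p.2) = 2 * (k : ℝ) * ∑ j, g j := by
    rw [Fintype.sum_prod_type]
    simp [Finset.sum_add_distrib, Finset.mul_sum, Finset.sum_comm]
    rw [← Finset.sum_add_distrib]
    exact Finset.sum_congr rfl (fun _ _ => by ring)
  have hsplit1 := Finset.sum_filter_add_sum_filter_not Finset.univ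
    (fun p : Fin k × Fin k => p.1 < p.2) (fun p => g p.1 + g p.2)
  have hsplit2 := Finset.sum_filter_add_sum_filter_not
    (Finset.univ.filter (fun p : Fin k × Fin k => ¬ p.1 < p.2))
    (fun p : Fin k × Fin k => p.2 < p.1) (fun p => g p.1 + g p.2)
  have he1 : (Finset.univ.filter (fun p : Fin k × Fin k => ¬ p.1 < p.2)).filter
      (fun p => p.2 < p.1) = Finset.univ.filter (fun p : Fin k × Fin k => p.2 < p.1) := by
    ext p; simp; intro h; exact le_of_lt h
  have he2 : (Finset.univ.filter (fun p : Fin k × Fin k => ¬ p.1 < p.2)).filter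
      (fun p => ¬ p.2 < p.1) = Finset.univ.filter (fun p : Fin k × Fin k => p.1 = p.2) := by
    ext p; simp [not_lt]; constructor
    · rintro ⟨h1, h2⟩; exact le_antisymm h2 h1
    · intro h; simp [h]
  have hdiag : ∑ p ∈ Finset.univ.filter (fun p : Fin k × Fin k => p.1 = p.2),
      (g p.1 + g p.2) = 2 * ∑ j, g j := by
    have himg : Finset.univ.filter (fun p : Fin k × Fin k => p.1 = p.2)
        = Finset.univ.image (fun i : Fin k => (i, i)) := by
      ext p
      simp only [Finset.mem_filter, Finset.mem_univ, true_and, Finset.mem_image,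
        Prod.ext_iff]
      constructor
      · intro h; exact ⟨p.1, rfl, h⟩
      · rintro ⟨a, h1, h2⟩; rw [← h1, ← h2]
    rw [himg, Finset.sum_image (by intro a _ b _ h; exact congrArg Prod.fst h), Finset.mul_sum]
    exact Finset.sum_congr rfl (fun _ _ => by ring)
  rw [he1, he2, hdiag, hswap] at hsplit2
  rw [← hsplit2] at hsplit1
  have : (2:ℝ) * ∑ p ∈ Finset.univ.filter (fun p : Fin k × Fin k => p.1 < p.2),
      (g p.1 + g p.2) + 2 * ∑ j, g j = 2 * (k:ℝ) * ∑ j, g j := by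
    rw [← htot]; rw [← hsplit1]; ring
  linarith
set_option maxHeartbeats 1000000 in

lemma key (K D a b : ℝ) (hK : 3 ≤ K) (hKD : K ≤ D) (ha : 1 ≤ a) (ha' : a ≤ D)
    (hb : 1 ≤ b) (hb' : b ≤ D) :
    (K + 1) / (2 * (D + 2 * K - 3)) * (1 / (a + K) + 1 / (b + K))
      ≤ 1 / (a + b + 2 * K - 4) := by
  have h1 : 0 < a + K := by linarith
  have h2 : 0 < b + K := by linarith
  have h3 : 0 < a + b + 2 * K - 4 := by linarith
  have hD3 : (3:ℝ) ≤ D := le_trans hK hKD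
  have k1 : (0:ℝ) < K + 1 := by linarith
  have d1 : (0:ℝ) < D - 1 := by linarith
  have dd : (0:ℝ) < D + 2*K - 3 := by linarith
  have dk : (0:ℝ) < D + K := by linarith
  have dk4 : (0:ℝ) < D + K - 4 := by linarith
  have qa : (0:ℝ) ≤ (a-1)*(D-a) := mul_nonneg (by linarith) (by linarith)
  have qb : (0:ℝ) ≤ (b-1)*(D-b) := mul_nonneg (by linarith) (by linarith)
  have e1 : (0:ℝ) ≤ (2*(K+1)^2*(D-1)) * ((D-a)*(D-b)) :=
    mul_nonneg (by positivity) (mul_nonneg (by linarith) (by linarith))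
  have e2 : (0:ℝ) ≤ ((K+1)*(D+2*K-3)*(D-1)) * ((D-a)*(b-1)) :=
    mul_nonneg (mul_nonneg (mul_nonneg k1.le dd.le) d1.le)
      (mul_nonneg (by linarith) (by linarith))
  have e3 : (0:ℝ) ≤ ((K+1)*(D+2*K-3)*(D-1)) * ((a-1)*(D-b)) :=
    mul_nonneg (mul_nonneg (mul_nonneg k1.le dd.le) d1.le)
      (mul_nonneg (by linarith) (by linarith))
  have e4 : (0:ℝ) ≤ (2*(D+K)*(D+K-4)*(D-1)) * ((a-1)*(b-1)) :=
    mul_nonneg (mul_nonneg (mul_nonneg (by linarith) dk4.le) d1.le)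
      (mul_nonneg (by linarith) (by linarith))
  have e5 : (0:ℝ) ≤ ((K+1)*(D-1)^2) * ((a-1)*(D-a) + (b-1)*(D-b)) :=
    mul_nonneg (by positivity) (by linarith)
  have hF2 : 0 ≤ (D-1)^2 * (2*(D+2*K-3)*(a+K)*(b+K) - (K+1)*(a+b+2*K)*(a+b+2*K-4)) := by
    linarith [e1, e2, e3, e4, e5]
  have hD1 : (D-1:ℝ)^2 ≠ 0 := by positivity
  have hF : 0 ≤ 2*(D+2*K-3)*(a+K)*(b+K) - (K+1)*(a+b+2*K)*(a+b+2*K-4) := by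
    have := div_nonneg hF2 (sq_nonneg (D-1))
    rwa [mul_div_cancel_left₀ _ hD1] at this
  rw [div_add_div _ _ h1.ne' h2.ne', div_mul_div_comm, div_le_div_iff₀ (by positivity) h3]
  nlinarith [hF]

theorem stmt1 (k Δ : ℕ) (hk : 3 ≤ k) (hkΔ : k ≤ Δ) (x : Fin k → ℝ)
    (hx : ∀ j, 1 ≤ x j ∧ x j ≤ (Δ : ℝ)) :
    ∑ j, 1 / (x j + (k : ℝ))
      ≤ 2 * ((Δ : ℝ) + 2 * (k : ℝ) - 3) / ((k : ℝ) ^ 2 - 1) *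
        ∑ p ∈ Finset.univ.filter (fun p : Fin k × Fin k => p.1 < p.2),
          1 / (x p.1 + x p.2 + 2 * (k : ℝ) - 4) := by
  have hK3 : (3:ℝ) ≤ (k:ℝ) := by exact_mod_cast hk
  have hKD : (k:ℝ) ≤ (Δ:ℝ) := by exact_mod_cast hkΔ
  have hpos1 : (0:ℝ) < (k:ℝ)^2 - 1 := by nlinarith
  have hpos2 : (0:ℝ) < (Δ:ℝ) + 2*(k:ℝ) - 3 := by linarith
  set c : ℝ := ((k:ℝ)+1)/(2*((Δ:ℝ)+2*(k:ℝ)-3)) with hc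
  have hstep : ∑ p ∈ Finset.univ.filter (fun p : Fin k × Fin k => p.1 < p.2),
      c * (1/(x p.1 + (k:ℝ)) + 1/(x p.2 + (k:ℝ)))
      ≤ ∑ p ∈ Finset.univ.filter (fun p : Fin k × Fin k => p.1 < p.2),
        1 / (x p.1 + x p.2 + 2 * (k:ℝ) - 4) := by
    apply Finset.sum_le_sum
    intro p _
    exact key (k:ℝ) (Δ:ℝ) (x p.1) (x p.2) hK3 hKD (hx p.1).1 (hx p.1).2
      (hx p.2).1 (hx p.2).2
  have hps := pair_sum (fun j => 1/(x j + (k:ℝ)))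
  rw [← Finset.mul_sum] at hstep
  rw [hps] at hstep
  have hM : (0:ℝ) < 2 * ((Δ:ℝ) + 2*(k:ℝ) - 3) / ((k:ℝ)^2 - 1) := by positivity
  have key2 : ∑ j, 1 / (x j + (k:ℝ))
      = 2 * ((Δ:ℝ) + 2*(k:ℝ) - 3) / ((k:ℝ)^2 - 1)
        * (c * (((k:ℝ) - 1) * ∑ j, 1 / (x j + (k:ℝ)))) := by
    rw [hc]
    generalize ∑ j, 1 / (x j + (k:ℝ)) = S
    field_simp
    ring
  rw [key2]
  exact mul_le_mul_of_nonneg_left hstep hM.le
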